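/- Let M be a real invertible symmetric m×m matrix. Then for every Schwartz function f on ℝᵐ: (2π)^{−m/2} ∫_{ℝᵐ} e^{(i/2)⟨Mu,u⟩} (∫_{ℝᵐ} e^{−i⟨v,u⟩} f(v) dv) du = |det M|^{−1/2} · e^{(iπ/4)·sgn M} · ∫_{ℝᵐ} e^{−(i/2)⟨M⁻¹v,v⟩} f(v) dv, where sgn M is the number of positive eigenvalues of M minus the number of negative eigenvalues of M (counted with multiplicity). (This is the generalized Fresnel formula, interpreted distributionally by pairing against f.) -/

import Mathlib

open Matrix MeasureTheory Complex Real FourierTransform RealInnerProductSpace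

lemma fresnel_inner_schwartz {m : ℕ} (f : SchwartzMap (Fin m → ℝ) ℂ) :
    ∃ h : SchwartzMap (Fin m → ℝ) ℂ,
      ∀ u, (∫ v : Fin m → ℝ, Complex.exp (-(Complex.I) * (v ⬝ᵥ u : ℝ)) * f v) = h u := by
  set e := EuclideanSpace.equiv (Fin m) ℝ with he
  set f' : SchwartzMap (EuclideanSpace ℝ (Fin m)) ℂ :=
    SchwartzMap.compCLMOfContinuousLinearEquiv ℂ e f with hf'
  set S : EuclideanSpace ℝ (Fin m) ≃L[ℝ] EuclideanSpace ℝ (Fin m) :=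
    (LinearEquiv.smulOfNeZero ℝ _ ((2 * Real.pi)⁻¹)
      (by positivity)).toContinuousLinearEquiv with hS
  set L : (Fin m → ℝ) ≃L[ℝ] EuclideanSpace ℝ (Fin m) := e.symm.trans S with hL
  refine ⟨SchwartzMap.compCLMOfContinuousLinearEquiv ℂ L
    (SchwartzMap.fourierTransformCLM ℂ f'), fun u => ?_⟩
  have h1 : (SchwartzMap.compCLMOfContinuousLinearEquiv ℂ L
      (SchwartzMap.fourierTransformCLM ℂ f')) u = 𝓕 (⇑f') (L u) := rfl
  rw [h1, Real.fourier_eq']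
  rw [← (EuclideanSpace.volume_preserving_symm_measurableEquiv_toLp (Fin m)).integral_comp
    (MeasurableEquiv.toLp 2 (Fin m → ℝ)).symm.measurableEmbedding]
  congr 1 with v
  have hLu : (L u : EuclideanSpace ℝ (Fin m)) = (2 * Real.pi)⁻¹ • (e.symm u) := rfl
  have hinner : ⟪v, L u⟫ = (2 * Real.pi)⁻¹ * (((MeasurableEquiv.toLp 2 (Fin m → ℝ)).symm v) ⬝ᵥ u) := by
    rw [hLu, real_inner_smul_right]
    congr 1
    simp [PiLp.inner_apply, dotProduct, mul_comm]
    change ∑ x, v.ofLp x * u x = ∑ i, u i * v.ofLp i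
    exact Finset.sum_congr rfl fun i _ => mul_comm _ _
  have harg : ((-2 * Real.pi * ((2 * Real.pi)⁻¹ * (((MeasurableEquiv.toLp 2 (Fin m → ℝ)).symm v) ⬝ᵥ u)) : ℝ) : ℂ) * Complex.I
      = -(Complex.I) * ((((MeasurableEquiv.toLp 2 (Fin m → ℝ)).symm v) ⬝ᵥ u : ℝ) : ℂ) := by
    have : (-2 * Real.pi * ((2 * Real.pi)⁻¹ * (((MeasurableEquiv.toLp 2 (Fin m → ℝ)).symm v) ⬝ᵥ u)) : ℝ)
        = -((((MeasurableEquiv.toLp 2 (Fin m → ℝ)).symm v) ⬝ᵥ u) : ℝ) := by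
      field_simp
    rw [this]; push_cast; ring
  rw [smul_eq_mul, hinner, harg]
  rfl

lemma integral_comp_mulVec_abs_det_one {m : ℕ} {Q : Matrix (Fin m) (Fin m) ℝ}
    (hQ : |Q.det| = 1) (φ : (Fin m → ℝ) → ℂ) :
    ∫ u : Fin m → ℝ, φ (Q.mulVec u) = ∫ u : Fin m → ℝ, φ u := by
  have hdet : Q.det ≠ 0 := by
    intro h; rw [h] at hQ; simp at hQ
  have hinv : Invertible Q := Q.invertibleOfIsUnitDet (isUnit_iff_ne_zero.2 hdet)
  have hmp : MeasurePreserving (fun u : Fin m → ℝ => Q.mulVec u) volume volume := by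
    constructor
    · exact (Matrix.toLin' Q).continuous_of_finiteDimensional.measurable
    · have := Real.map_matrix_volume_pi_eq_smul_volume_pi hdet
      have h1 : ⇑(Matrix.toLin' Q) = fun u : Fin m → ℝ => Q.mulVec u := by
        funext u; simp [Matrix.toLin'_apply]
      rw [h1] at this
      rw [this]
      have h3 : |Q.det⁻¹| = 1 := by rw [abs_inv, hQ]; norm_num
      rw [h3]
      simp
  have hemb : MeasurableEmbedding (fun u : Fin m → ℝ => Q.mulVec u) := by
    have h2 : ⇑((Q.toLinearEquiv' hinv).toContinuousLinearEquiv.toHomeomorph)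
        = fun u : Fin m → ℝ => Q.mulVec u := by
      funext u
      simp [Matrix.toLinearEquiv', Matrix.toLin'_apply]
    exact h2 ▸ (Q.toLinearEquiv' hinv).toContinuousLinearEquiv.toHomeomorph.measurableEmbedding
  exact hmp.integral_comp hemb φ

lemma mulVec_dotProduct_eq {m : ℕ} (A : Matrix (Fin m) (Fin m) ℝ) (x y : Fin m → ℝ) :
    (A.mulVec x) ⬝ᵥ y = x ⬝ᵥ (Aᵀ.mulVec y) := by
  simp only [dotProduct, Matrix.mulVec, Matrix.transpose_apply, dotProduct,
    Finset.sum_mul, Finset.mul_sum]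
  rw [Finset.sum_comm]
  congr 1; ext j; congr 1; ext i; ring

lemma fresnel_step2 {m : ℕ} (M Q : Matrix (Fin m) (Fin m) ℝ) (d : Fin m → ℝ)
    (hQ : Qᵀ * Q = 1) (hMQ : M = Q * Matrix.diagonal d * Qᵀ)
    (f : SchwartzMap (Fin m → ℝ) ℂ) {ε : ℝ} (hε : 0 < ε) :
    ∫ u : Fin m → ℝ, Complex.exp (-(ε:ℂ) * (u ⬝ᵥ u : ℝ)) *
        (Complex.exp ((Complex.I/2) * (M.mulVec u ⬝ᵥ u : ℝ)) *
          ∫ v : Fin m → ℝ, Complex.exp (-(Complex.I) * (v ⬝ᵥ u : ℝ)) * f v)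
      = ∫ v : Fin m → ℝ, f v *
          ∏ i, ((Real.pi : ℂ) / ((ε:ℂ) - Complex.I * d i / 2)) ^ (1/2 : ℂ) *
            Complex.exp (-((Qᵀ.mulVec v i : ℝ) : ℂ)^2 / (4 * ((ε:ℂ) - Complex.I * d i / 2))) := by
  -- notation
  set F : (Fin m → ℝ) → (Fin m → ℝ) → ℂ := fun u v =>
    Complex.exp ((Complex.I/2) * (M.mulVec u ⬝ᵥ u : ℝ) - (ε:ℂ) * (u ⬝ᵥ u : ℝ)
      - Complex.I * (v ⬝ᵥ u : ℝ)) * f v with hF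
  have hQQ : ∀ x y : Fin m → ℝ, (Q.mulVec x) ⬝ᵥ (Q.mulVec y) = x ⬝ᵥ y := by
    intro x y
    rw [mulVec_dotProduct_eq, Matrix.mulVec_mulVec, hQ, Matrix.one_mulVec]
  have hquad : ∀ w : Fin m → ℝ, (M.mulVec (Q.mulVec w)) ⬝ᵥ (Q.mulVec w)
      = ∑ i, d i * (w i)^2 := by
    intro w
    have h1 : M.mulVec (Q.mulVec w) = Q.mulVec ((Matrix.diagonal d).mulVec w) := by
      rw [Matrix.mulVec_mulVec, Matrix.mulVec_mulVec, hMQ]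
      congr 1
      rw [Matrix.mul_assoc, Matrix.mul_assoc, hQ, Matrix.mul_one]
    rw [h1, hQQ]
    simp [dotProduct, Matrix.mulVec_diagonal]
    congr 1; ext i; ring
  have hlin : ∀ (v w : Fin m → ℝ), v ⬝ᵥ (Q.mulVec w) = (Qᵀ.mulVec v) ⬝ᵥ w := by
    intro v w
    rw [dotProduct_comm, mulVec_dotProduct_eq, dotProduct_comm]
  have hQdet : |Q.det| = 1 := by
    have h2 : Q.det ^ 2 = 1 := by
      have := congrArg Matrix.det hQ
      simpa [Matrix.det_transpose, pow_two] using this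
    have h3 : |Q.det| ^ 2 = 1 := by rw [_root_.sq_abs]; exact h2
    nlinarith [abs_nonneg Q.det]
  have hb : ∀ i : Fin m, (0:ℝ) < ((ε:ℂ) - Complex.I * (d i) / 2).re := by
    intro i
    simp [Complex.sub_re, Complex.div_re]
    positivity
  -- inner Gaussian integral
  have hJ : ∀ v : Fin m → ℝ,
      (∫ u : Fin m → ℝ, Complex.exp ((Complex.I/2) * (M.mulVec u ⬝ᵥ u : ℝ)
        - (ε:ℂ) * (u ⬝ᵥ u : ℝ) - Complex.I * (v ⬝ᵥ u : ℝ)))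
      = ∏ i, ((Real.pi : ℂ) / ((ε:ℂ) - Complex.I * d i / 2)) ^ (1/2 : ℂ) *
          Complex.exp (-((Qᵀ.mulVec v i : ℝ):ℂ)^2 / (4 * ((ε:ℂ) - Complex.I * d i / 2))) := by
    intro v
    rw [← integral_comp_mulVec_abs_det_one hQdet
      (fun u => Complex.exp ((Complex.I/2) * (M.mulVec u ⬝ᵥ u : ℝ)
        - (ε:ℂ) * (u ⬝ᵥ u : ℝ) - Complex.I * (v ⬝ᵥ u : ℝ)))]
    have key : ∀ w : Fin m → ℝ,
        ((Complex.I/2) * ((M.mulVec (Q.mulVec w)) ⬝ᵥ (Q.mulVec w) : ℝ)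
          - (ε:ℂ) * ((Q.mulVec w) ⬝ᵥ (Q.mulVec w) : ℝ)
          - Complex.I * ((v ⬝ᵥ (Q.mulVec w) : ℝ)))
        = -∑ i, ((ε:ℂ) - Complex.I * d i / 2) * (w i:ℂ)^2
          + ∑ i, (-Complex.I * ((Qᵀ.mulVec v) i : ℝ)) * (w i:ℂ) := by
      intro w
      rw [hquad, hQQ, hlin]
      simp only [dotProduct]
      push_cast
      rw [Finset.mul_sum, Finset.mul_sum, Finset.mul_sum, ← Finset.sum_neg_distrib,
        ← Finset.sum_add_distrib, ← Finset.sum_sub_distrib, ← Finset.sum_sub_distrib]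
      apply Finset.sum_congr rfl; intro i _; ring
    simp only [key]
    rw [GaussianFourier.integral_cexp_neg_sum_mul_add hb (fun i => -Complex.I * ((Qᵀ.mulVec v) i : ℝ))]
    apply Finset.prod_congr rfl; intro i _
    congr 1
    congr 1
    rw [show (-Complex.I * ((Qᵀ.mulVec v i : ℝ):ℂ))^2 = -(((Qᵀ.mulVec v i : ℝ):ℂ))^2 by
      rw [mul_pow]; simp [Complex.I_sq]]
  -- continuity helpers
  have hcA : ∀ (A : Matrix (Fin m) (Fin m) ℝ), Continuous fun u : Fin m → ℝ => A.mulVec u := by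
    intro A
    have h1 : ⇑(Matrix.toLin' A) = fun u : Fin m → ℝ => A.mulVec u := by
      funext u; simp [Matrix.toLin'_apply]
    rw [← h1]; exact (Matrix.toLin' A).continuous_of_finiteDimensional
  have hcd : Continuous fun p : (Fin m → ℝ) × (Fin m → ℝ) => (p.1 ⬝ᵥ p.2 : ℝ) := by
    simp only [dotProduct]
    exact continuous_finset_sum _ (fun i _ =>
      ((continuous_apply i).comp continuous_fst).mul ((continuous_apply i).comp continuous_snd))
  have hFcont : Continuous (Function.uncurry F) := by
    have huncur : Function.uncurry F = fun p : (Fin m → ℝ) × (Fin m → ℝ) =>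
        Complex.exp ((Complex.I/2) * (M.mulVec p.1 ⬝ᵥ p.1 : ℝ) - (ε:ℂ) * (p.1 ⬝ᵥ p.1 : ℝ)
          - Complex.I * (p.2 ⬝ᵥ p.1 : ℝ)) * f p.2 := rfl
    rw [huncur]
    apply Continuous.mul
    · apply Complex.continuous_exp.comp
      apply Continuous.sub
      apply Continuous.sub
      · exact continuous_const.mul (Complex.continuous_ofReal.comp
          (hcd.comp (((hcA M).comp continuous_fst).prodMk continuous_fst)))
      · exact continuous_const.mul (Complex.continuous_ofReal.comp
          (hcd.comp (continuous_fst.prodMk continuous_fst)))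
      · exact continuous_const.mul (Complex.continuous_ofReal.comp
          (hcd.comp (continuous_snd.prodMk continuous_fst)))
    · exact f.continuous.comp continuous_snd
  have hnorm : ∀ u v : Fin m → ℝ, ‖F u v‖ = Real.exp (-ε * (u ⬝ᵥ u)) * ‖f v‖ := by
    intro u v
    simp only [hF]
    rw [norm_mul]
    congr 1
    rw [Complex.norm_exp]
    congr 1
    simp [Complex.sub_re, Complex.mul_re, Complex.div_re, Complex.I_re, Complex.I_im,
      Complex.ofReal_re, Complex.ofReal_im, Complex.normSq]
  have hint1 : Integrable (fun u : Fin m → ℝ => Real.exp (-ε * (u ⬝ᵥ u))) := by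
    have heq : (fun u : Fin m → ℝ => Real.exp (-ε * (u ⬝ᵥ u)))
        = fun u => ∏ i, Real.exp (-ε * (u i)^2) := by
      funext u
      rw [← Real.exp_sum]
      congr 1
      simp only [dotProduct]
      rw [Finset.mul_sum]
      apply Finset.sum_congr rfl; intro i _; ring
    rw [heq]
    exact Integrable.fintype_prod (fun i => integrable_exp_neg_mul_sq hε)
  have hdom : Integrable (fun p : (Fin m → ℝ) × (Fin m → ℝ) =>
      Real.exp (-ε * (p.1 ⬝ᵥ p.1)) * ‖f p.2‖) (volume.prod volume) :=
    hint1.mul_prod f.integrable.norm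
  have hFint : Integrable (Function.uncurry F) (volume.prod volume) := by
    apply Integrable.mono' hdom hFcont.aestronglyMeasurable
    filter_upwards with p
    rw [show Function.uncurry F p = F p.1 p.2 from rfl, hnorm]
  have hsplit : ∀ u : Fin m → ℝ,
      Complex.exp (-(ε:ℂ) * (u ⬝ᵥ u : ℝ)) *
        (Complex.exp ((Complex.I/2) * (M.mulVec u ⬝ᵥ u : ℝ)) *
          ∫ v : Fin m → ℝ, Complex.exp (-(Complex.I) * (v ⬝ᵥ u : ℝ)) * f v)
      = ∫ v : Fin m → ℝ, F u v := by
    intro u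
    rw [show Complex.exp (-(ε:ℂ) * (u ⬝ᵥ u : ℝ)) *
        (Complex.exp ((Complex.I/2) * (M.mulVec u ⬝ᵥ u : ℝ)) *
          ∫ v : Fin m → ℝ, Complex.exp (-(Complex.I) * (v ⬝ᵥ u : ℝ)) * f v)
      = Complex.exp (-(ε:ℂ) * (u ⬝ᵥ u : ℝ) + (Complex.I/2) * (M.mulVec u ⬝ᵥ u : ℝ)) *
          ∫ v : Fin m → ℝ, Complex.exp (-(Complex.I) * (v ⬝ᵥ u : ℝ)) * f v by
        rw [Complex.exp_add]; ring]
    rw [← integral_const_mul]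
    apply integral_congr_ae
    filter_upwards with v
    simp only [hF]
    rw [← mul_assoc, ← Complex.exp_add]
    congr 2
    ring
  have hfin : ∀ v : Fin m → ℝ, (∫ u : Fin m → ℝ, F u v)
      = f v * ∏ i, ((Real.pi : ℂ) / ((ε:ℂ) - Complex.I * d i / 2)) ^ (1/2 : ℂ) *
          Complex.exp (-((Qᵀ.mulVec v i : ℝ):ℂ)^2 / (4 * ((ε:ℂ) - Complex.I * d i / 2))) := by
    intro v
    simp only [hF]
    rw [integral_mul_const, hJ v, mul_comm]
  calc ∫ u : Fin m → ℝ, Complex.exp (-(ε:ℂ) * (u ⬝ᵥ u : ℝ)) *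
        (Complex.exp ((Complex.I/2) * (M.mulVec u ⬝ᵥ u : ℝ)) *
          ∫ v : Fin m → ℝ, Complex.exp (-(Complex.I) * (v ⬝ᵥ u : ℝ)) * f v)
      = ∫ u : Fin m → ℝ, ∫ v : Fin m → ℝ, F u v := by simp only [hsplit]
    _ = ∫ v : Fin m → ℝ, ∫ u : Fin m → ℝ, F u v := integral_integral_swap hFint
    _ = _ := by simp only [hfin]

lemma cont_mulVec {m : ℕ} (A : Matrix (Fin m) (Fin m) ℝ) :
    Continuous fun u : Fin m → ℝ => A.mulVec u := by
  have h1 : ⇑(Matrix.toLin' A) = fun u : Fin m → ℝ => A.mulVec u := by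
    funext u; simp [Matrix.toLin'_apply]
  rw [← h1]; exact (Matrix.toLin' A).continuous_of_finiteDimensional

lemma cont_dot {m : ℕ} : Continuous fun p : (Fin m → ℝ) × (Fin m → ℝ) => (p.1 ⬝ᵥ p.2 : ℝ) := by
  simp only [dotProduct]
  exact continuous_finset_sum _ (fun i _ =>
    ((continuous_apply i).comp continuous_fst).mul ((continuous_apply i).comp continuous_snd))

lemma fresnel_step1 {m : ℕ} (M : Matrix (Fin m) (Fin m) ℝ) (h : SchwartzMap (Fin m → ℝ) ℂ) :
    Filter.Tendsto (fun ε : ℝ => ∫ u : Fin m → ℝ,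
        Complex.exp (-(ε:ℂ) * (u ⬝ᵥ u : ℝ)) *
          (Complex.exp ((Complex.I/2) * (M.mulVec u ⬝ᵥ u : ℝ)) * h u))
      (nhdsWithin 0 (Set.Ioi 0))
      (nhds (∫ u : Fin m → ℝ,
        Complex.exp ((Complex.I/2) * (M.mulVec u ⬝ᵥ u : ℝ)) * h u)) := by
  apply tendsto_integral_filter_of_dominated_convergence (fun u => ‖h u‖)
  · filter_upwards with ε
    apply Continuous.aestronglyMeasurable
    apply Continuous.mul
    · exact Complex.continuous_exp.comp (continuous_const.mul
        (Complex.continuous_ofReal.comp (cont_dot.comp (continuous_id.prodMk continuous_id))))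
    · exact Continuous.mul
        (Complex.continuous_exp.comp (continuous_const.mul (Complex.continuous_ofReal.comp
          (cont_dot.comp ((cont_mulVec M).prodMk continuous_id)))))
        h.continuous
  · filter_upwards [self_mem_nhdsWithin] with ε hε
    filter_upwards with u
    rw [norm_mul, norm_mul]
    have h1 : ‖Complex.exp (-(ε:ℂ) * (u ⬝ᵥ u : ℝ))‖ ≤ 1 := by
      rw [Complex.norm_exp]
      rw [Real.exp_le_one_iff]
      have hx : (0:ℝ) ≤ u ⬝ᵥ u := Finset.sum_nonneg fun i _ => mul_self_nonneg (u i)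
      have : (-(ε:ℂ) * (u ⬝ᵥ u : ℝ)).re = -ε * (u ⬝ᵥ u) := by
        simp [Complex.mul_re]
      rw [this]
      have : (0:ℝ) < ε := hε
      nlinarith
    have h2 : ‖Complex.exp ((Complex.I/2) * (M.mulVec u ⬝ᵥ u : ℝ))‖ = 1 := by
      rw [Complex.norm_exp]
      have : ((Complex.I/2) * (M.mulVec u ⬝ᵥ u : ℝ)).re = 0 := by
        simp [Complex.mul_re, Complex.div_re]
      rw [this, Real.exp_zero]
    calc ‖Complex.exp (-(ε:ℂ) * (u ⬝ᵥ u : ℝ))‖ *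
          (‖Complex.exp ((Complex.I/2) * (M.mulVec u ⬝ᵥ u : ℝ))‖ * ‖h u‖)
        ≤ 1 * (1 * ‖h u‖) := by
          apply mul_le_mul h1 _ (by positivity) zero_le_one
          rw [h2]
      _ = ‖h u‖ := by ring
  · exact h.integrable.norm
  · filter_upwards with u
    have hc : ContinuousAt (fun ε : ℝ => Complex.exp (-(ε:ℂ) * (u ⬝ᵥ u : ℝ)) *
        (Complex.exp ((Complex.I/2) * (M.mulVec u ⬝ᵥ u : ℝ)) * h u)) 0 := by
      apply ContinuousAt.mul _ continuousAt_const
      exact (Complex.continuous_exp.comp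
        ((Complex.continuous_ofReal.comp continuous_id).neg.mul continuous_const)).continuousAt
    have h5 := hc.tendsto.mono_left (nhdsWithin_le_nhds (s := Set.Ioi (0:ℝ)))
    simpa using h5

lemma fresnel_denom_ne {d t : ℝ} (hd : d ≠ 0) : ((t:ℂ) - Complex.I * d / 2) ≠ 0 := by
  intro h
  have := congrArg Complex.im h
  simp [Complex.sub_im, Complex.mul_im] at this
  exact hd this

lemma fresnel_phi_bound {d t : ℝ} (hd : d ≠ 0) :
    ‖((Real.pi : ℂ) / ((t:ℂ) - Complex.I * d / 2)) ^ (1/2 : ℂ)‖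
      ≤ (2 * Real.pi / |d|) ^ ((1:ℝ)/2) := by
  have h0 : ((1:ℂ)/2) = (((1:ℝ)/2 : ℝ) : ℂ) := by norm_num
  rw [h0, Complex.norm_cpow_real]
  apply Real.rpow_le_rpow (by positivity)
  · -- abs (π / z) ≤ 2π/|d|
    rw [norm_div, Complex.norm_of_nonneg Real.pi_pos.le]
    rw [div_le_div_iff₀ (by
      have := fresnel_denom_ne (t := t) hd
      exact (norm_pos_iff.mpr this)) (by positivity)]
    have him : |d| / 2 ≤ ‖((t:ℂ) - Complex.I * d / 2)‖ := by
      have h1 : |((t:ℂ) - Complex.I * d / 2).im| ≤ ‖((t:ℂ) - Complex.I * d / 2)‖ :=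
        Complex.abs_im_le_norm _
      have h2 : ((t:ℂ) - Complex.I * d / 2).im = -(d/2) := by
        simp [Complex.sub_im, Complex.mul_im]
      rw [h2, abs_neg, abs_div] at h1
      simpa using h1
    calc Real.pi * |d| = (|d|/2) * (2 * Real.pi) := by ring
      _ ≤ ‖((t:ℂ) - Complex.I * d / 2)‖ * (2 * Real.pi) := by
          apply mul_le_mul_of_nonneg_right him (by positivity)
      _ = 2 * Real.pi * ‖((t:ℂ) - Complex.I * d / 2)‖ := by ring
  · positivity

lemma fresnel_psi_bound {d t x : ℝ} (hd : d ≠ 0) (ht : 0 ≤ t) :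
    ‖Complex.exp (-((x:ℝ):ℂ)^2 / (4 * ((t:ℂ) - Complex.I * d / 2)))‖ ≤ 1 := by
  rw [Complex.norm_exp, Real.exp_le_one_iff]
  have hz : (4 * ((t:ℂ) - Complex.I * d / 2)) ≠ 0 := by
    apply mul_ne_zero (by norm_num) (fresnel_denom_ne hd)
  have heq : -((x:ℝ):ℂ)^2 / (4 * ((t:ℂ) - Complex.I * d / 2))
      = ((-(x^2) : ℝ) : ℂ) * (4 * ((t:ℂ) - Complex.I * d / 2))⁻¹ := by
    push_cast; ring
  rw [heq, Complex.re_ofReal_mul]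
  apply mul_nonpos_of_nonpos_of_nonneg
  · simp [neg_nonpos]; positivity
  · rw [Complex.inv_re]
    apply div_nonneg _ (Complex.normSq_nonneg _)
    simp [Complex.mul_re, Complex.sub_re]
    positivity

lemma fresnel_phi_cont {d : ℝ} (hd : d ≠ 0) :
    ContinuousAt (fun t : ℝ => ((Real.pi : ℂ) / ((t:ℂ) - Complex.I * d / 2)) ^ (1/2 : ℂ)) 0 := by
  have h2 : ContinuousAt (fun t : ℝ => (Real.pi : ℂ) / ((t:ℂ) - Complex.I * d / 2)) 0 := by
    apply ContinuousAt.div continuousAt_const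
    · exact ((Complex.continuous_ofReal.continuousAt).sub continuousAt_const)
    · exact fresnel_denom_ne hd
  have h1 : ContinuousAt (fun z : ℂ => z ^ (1/2 : ℂ))
      ((Real.pi : ℂ) / (((0:ℝ):ℂ) - Complex.I * d / 2)) := by
    apply continuousAt_cpow_const
    rw [Complex.mem_slitPlane_iff]
    right
    have hne := fresnel_denom_ne (t := (0:ℝ)) hd
    rw [Complex.div_im]
    simp only [Complex.ofReal_im, Complex.ofReal_re]
    have him : (((0:ℝ):ℂ) - Complex.I * d / 2).im = -(d/2) := by
      simp [Complex.sub_im, Complex.mul_im]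
    have hre : (((0:ℝ):ℂ) - Complex.I * d / 2).re = 0 := by
      simp [Complex.sub_re, Complex.mul_re]
    rw [him, hre]
    intro hcon
    rw [zero_mul, zero_div, zero_sub, neg_eq_zero, div_eq_zero_iff] at hcon
    rcases hcon with hcon | hcon
    · rcases mul_eq_zero.mp hcon with h | h
      · exact Real.pi_ne_zero h
      · exact hd (by linarith)
    · exact Complex.normSq_pos.mpr hne |>.ne' hcon
  exact ContinuousAt.comp (f := fun t : ℝ => (Real.pi : ℂ) / ((t:ℂ) - Complex.I * d / 2)) h1 h2

lemma fresnel_psi_cont {d x : ℝ} (hd : d ≠ 0) :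
    ContinuousAt (fun t : ℝ =>
      Complex.exp (-((x:ℝ):ℂ)^2 / (4 * ((t:ℂ) - Complex.I * d / 2)))) 0 := by
  apply Complex.continuous_exp.continuousAt.comp
  apply ContinuousAt.div continuousAt_const
  · exact continuousAt_const.mul ((Complex.continuous_ofReal.continuousAt).sub continuousAt_const)
  · exact mul_ne_zero (by norm_num) (fresnel_denom_ne hd)

lemma fresnel_step3 {m : ℕ} (Q : Matrix (Fin m) (Fin m) ℝ) (d : Fin m → ℝ)
    (hd : ∀ i, d i ≠ 0) (f : SchwartzMap (Fin m → ℝ) ℂ) :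
    Filter.Tendsto (fun ε : ℝ => ∫ v : Fin m → ℝ, f v *
        ∏ i, ((Real.pi : ℂ) / ((ε:ℂ) - Complex.I * d i / 2)) ^ (1/2 : ℂ) *
          Complex.exp (-((Qᵀ.mulVec v i : ℝ):ℂ)^2 / (4 * ((ε:ℂ) - Complex.I * d i / 2))))
      (nhdsWithin 0 (Set.Ioi 0))
      (nhds (∫ v : Fin m → ℝ, f v *
        ∏ i, ((Real.pi : ℂ) / (((0:ℝ):ℂ) - Complex.I * d i / 2)) ^ (1/2 : ℂ) *
          Complex.exp (-((Qᵀ.mulVec v i : ℝ):ℂ)^2 / (4 * (((0:ℝ):ℂ) - Complex.I * d i / 2))))) := by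
  apply tendsto_integral_filter_of_dominated_convergence
    (fun v => (∏ i, (2 * Real.pi / |d i|) ^ ((1:ℝ)/2)) * ‖f v‖)
  · filter_upwards with ε
    apply Continuous.aestronglyMeasurable
    apply f.continuous.mul
    apply continuous_finset_prod
    intro i _
    apply continuous_const.mul
    apply Complex.continuous_exp.comp
    apply Continuous.div
    · apply Continuous.neg
      apply Continuous.pow
      exact Complex.continuous_ofReal.comp ((continuous_apply i).comp (cont_mulVec Qᵀ))
    · exact continuous_const
    · intro v; exact mul_ne_zero (by norm_num) (fresnel_denom_ne (hd i))
  · filter_upwards [self_mem_nhdsWithin] with ε (hε : ε ∈ Set.Ioi 0)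
    filter_upwards with v
    rw [norm_mul, mul_comm]
    apply mul_le_mul_of_nonneg_right _ (norm_nonneg _)
    rw [norm_prod]
    apply Finset.prod_le_prod (fun i _ => norm_nonneg _)
    intro i _
    rw [norm_mul]
    calc ‖((Real.pi : ℂ) / ((ε:ℂ) - Complex.I * d i / 2)) ^ (1/2 : ℂ)‖ *
          ‖Complex.exp (-((Qᵀ.mulVec v i : ℝ):ℂ)^2 / (4 * ((ε:ℂ) - Complex.I * d i / 2)))‖
        ≤ (2 * Real.pi / |d i|) ^ ((1:ℝ)/2) * 1 := by
          apply mul_le_mul (fresnel_phi_bound (hd i)) (fresnel_psi_bound (hd i) (le_of_lt hε))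
            (norm_nonneg _) (by positivity)
      _ = (2 * Real.pi / |d i|) ^ ((1:ℝ)/2) := by ring
  · exact (f.integrable.norm).const_mul _
  · filter_upwards with v
    apply Filter.Tendsto.mono_left _ (nhdsWithin_le_nhds (s := Set.Ioi (0:ℝ)))
    apply Filter.Tendsto.mul tendsto_const_nhds
    apply tendsto_finset_prod
    intro i _
    exact ((fresnel_phi_cont (hd i)).mul (fresnel_psi_cont (hd i))).tendsto

lemma cpow_half_posI {s : ℝ} (hs : 0 < s) :
    ((s:ℂ) * Complex.I) ^ (1/2 : ℂ)
      = (Real.sqrt s : ℂ) * Complex.exp (Complex.I * Real.pi / 4) := by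
  have hz : ((s:ℂ) * Complex.I) ≠ 0 :=
    mul_ne_zero (Complex.ofReal_ne_zero.mpr hs.ne') Complex.I_ne_zero
  rw [Complex.cpow_def_of_ne_zero hz]
  have habs : ‖((s:ℂ) * Complex.I)‖ = s := by
    simp [abs_of_pos hs]
  have harg : ((s:ℂ) * Complex.I).arg = Real.pi/2 := by
    rw [Complex.arg_real_mul _ hs, Complex.arg_I]
  have hlog : Complex.log ((s:ℂ) * Complex.I)
      = ((Real.log s : ℝ) : ℂ) + ((Real.pi/2 : ℝ) : ℂ) * Complex.I := by
    apply Complex.ext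
    · simp [Complex.log_re, habs]
    · simp [Complex.log_im, harg]
  rw [hlog, show (((Real.log s : ℝ) : ℂ) + ((Real.pi/2 : ℝ) : ℂ) * Complex.I) * (1/2 : ℂ)
      = ((Real.log s / 2 : ℝ) : ℂ) + Complex.I * Real.pi / 4 by push_cast; ring]
  rw [Complex.exp_add]
  congr 1
  rw [← Complex.ofReal_exp]
  congr 1
  rw [Real.sqrt_eq_rpow, Real.rpow_def_of_pos hs]
  ring_nf

lemma cpow_half_negI {s : ℝ} (hs : 0 < s) :
    (-((s:ℂ) * Complex.I)) ^ (1/2 : ℂ)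
      = (Real.sqrt s : ℂ) * Complex.exp (-(Complex.I * Real.pi / 4)) := by
  have hz : (-((s:ℂ) * Complex.I)) ≠ 0 :=
    neg_ne_zero.mpr (mul_ne_zero (Complex.ofReal_ne_zero.mpr hs.ne') Complex.I_ne_zero)
  rw [Complex.cpow_def_of_ne_zero hz]
  have hrw : (-((s:ℂ) * Complex.I)) = (s:ℂ) * (-Complex.I) := by ring
  have habs : ‖(-((s:ℂ) * Complex.I))‖ = s := by
    simp [abs_of_pos hs]
  have harg : (-((s:ℂ) * Complex.I)).arg = -(Real.pi/2) := by
    rw [hrw, Complex.arg_real_mul _ hs, Complex.arg_neg_I]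
  have hlog : Complex.log (-((s:ℂ) * Complex.I))
      = ((Real.log s : ℝ) : ℂ) + ((-(Real.pi/2) : ℝ) : ℂ) * Complex.I := by
    apply Complex.ext
    · simp [Complex.log_re, habs]
    · simp [Complex.log_im, harg]
  rw [hlog, show (((Real.log s : ℝ) : ℂ) + ((-(Real.pi/2) : ℝ) : ℂ) * Complex.I) * (1/2 : ℂ)
      = ((Real.log s / 2 : ℝ) : ℂ) + -(Complex.I * Real.pi / 4) by push_cast; ring]
  rw [Complex.exp_add]
  congr 1
  rw [← Complex.ofReal_exp]
  congr 1
  rw [Real.sqrt_eq_rpow, Real.rpow_def_of_pos hs]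
  ring_nf

lemma fresnel_phi_zero {d : ℝ} (hd : d ≠ 0) :
    ((Real.pi : ℂ) / (((0:ℝ):ℂ) - Complex.I * d / 2)) ^ (1/2 : ℂ)
      = (Real.sqrt (2 * Real.pi / |d|) : ℂ) *
        Complex.exp (Complex.I * Real.pi / 4 * (if 0 < d then (1:ℂ) else -1)) := by
  have hne : (((0:ℝ):ℂ) - Complex.I * d / 2) ≠ 0 := fresnel_denom_ne hd
  rcases lt_or_gt_of_ne hd with hneg | hpos
  · -- d < 0 : base = -((2π/|d|) I)
    have hbase : (Real.pi : ℂ) / (((0:ℝ):ℂ) - Complex.I * d / 2)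
        = -(((2 * Real.pi / |d| : ℝ) : ℂ) * Complex.I) := by
      rw [div_eq_iff hne, abs_of_neg hneg]
      push_cast
      have : (d:ℂ) ≠ 0 := Complex.ofReal_ne_zero.mpr hd
      field_simp
      ring_nf
      rw [Complex.I_sq]
      ring
    rw [hbase, cpow_half_negI (by positivity), if_neg (by linarith)]
    congr 1
    rw [show ((-1 : ℂ)) = (-1 : ℂ) from rfl]
    ring_nf
  · have hbase : (Real.pi : ℂ) / (((0:ℝ):ℂ) - Complex.I * d / 2)
        = ((2 * Real.pi / |d| : ℝ) : ℂ) * Complex.I := by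
      rw [div_eq_iff hne, abs_of_pos hpos]
      push_cast
      have : (d:ℂ) ≠ 0 := Complex.ofReal_ne_zero.mpr hd
      field_simp
      ring_nf
      rw [Complex.I_sq]
      ring
    rw [hbase, cpow_half_posI (by positivity), if_pos hpos]
    congr 1
    ring_nf

lemma fresnel_psi_zero {d x : ℝ} (hd : d ≠ 0) :
    -((x:ℝ):ℂ)^2 / (4 * (((0:ℝ):ℂ) - Complex.I * d / 2))
      = -(Complex.I/2) * ((x^2/d : ℝ) : ℂ) := by
  have hne : (((0:ℝ):ℂ) - Complex.I * d / 2) ≠ 0 := fresnel_denom_ne hd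
  have hdc : (d:ℂ) ≠ 0 := Complex.ofReal_ne_zero.mpr hd
  rw [div_eq_iff (mul_ne_zero (by norm_num) hne)]
  push_cast
  field_simp
  ring_nf
  rw [Complex.I_sq]
  ring

lemma fresnel_const {m : ℕ} (d : Fin m → ℝ) (hd : ∀ i, d i ≠ 0) :
    (2 * Real.pi) ^ (-(m : ℝ) / 2) * ∏ i, Real.sqrt (2 * Real.pi / |d i|)
      = |∏ i, d i| ^ (-(1:ℝ)/2) := by
  have h2π : (0:ℝ) < 2 * Real.pi := by positivity
  have hneg : (-(1:ℝ)/2) = -((1:ℝ)/2) := by norm_num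
  have habs : |∏ i, d i| = ∏ i, |d i| := Finset.abs_prod _ _
  have h1 : ∀ i : Fin m, Real.sqrt (2*Real.pi/|d i|)
      = (2*Real.pi)^((1:ℝ)/2) * |d i| ^ (-(1:ℝ)/2) := by
    intro i
    rw [Real.sqrt_eq_rpow, Real.div_rpow h2π.le (abs_nonneg _), hneg,
      Real.rpow_neg (abs_nonneg _), div_eq_mul_inv]
  rw [habs, Finset.prod_congr rfl (fun i _ => h1 i), Finset.prod_mul_distrib,
    Finset.prod_const, Finset.card_univ, Fintype.card_fin]
  rw [← Real.rpow_natCast ((2*Real.pi)^((1:ℝ)/2)) m, ← Real.rpow_mul h2π.le]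
  rw [← Real.finset_prod_rpow Finset.univ _ (fun i _ => abs_nonneg _) _]
  rw [← mul_assoc, ← Real.rpow_add h2π]
  rw [show (-(m:ℝ)/2 + (1:ℝ)/2 * m) = 0 by ring, Real.rpow_zero, one_mul]

lemma fresnel_sigma {m : ℕ} (d : Fin m → ℝ) (hd : ∀ i, d i ≠ 0) :
    (∑ i, (if 0 < d i then (1:ℝ) else -1))
      = ((Finset.univ.filter fun i => 0 < d i).card : ℝ)
        - ((Finset.univ.filter fun i => d i < 0).card : ℝ) := by
  classical
  rw [← Finset.sum_filter_add_sum_filter_not Finset.univ (fun i => 0 < d i)]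
  have h1 : ∑ i ∈ Finset.univ.filter (fun i => 0 < d i), (if 0 < d i then (1:ℝ) else -1)
      = ((Finset.univ.filter fun i => 0 < d i).card : ℝ) := by
    rw [Finset.sum_congr rfl (fun i hi => if_pos (Finset.mem_filter.mp hi).2)]
    simp
  have h2 : ∑ i ∈ Finset.univ.filter (fun i => ¬ 0 < d i), (if 0 < d i then (1:ℝ) else -1)
      = -((Finset.univ.filter fun i => d i < 0).card : ℝ) := by
    have hfe : Finset.univ.filter (fun i => ¬ 0 < d i)
        = Finset.univ.filter (fun i => d i < 0) := by
      apply Finset.filter_congr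
      intro i _
      constructor
      · intro h; exact lt_of_le_of_ne (not_lt.mp h) (hd i)
      · intro h; exact not_lt.mpr h.le
    rw [hfe, Finset.sum_congr rfl (fun i hi => if_neg (not_lt.mpr
      (Finset.mem_filter.mp hi).2.le))]
    simp
  rw [h1, h2]
  ring

/-- generalized Fresnel formula: for an invertible real symmetric `m × m`
matrix `M` and every Schwartz function `f` on `ℝᵐ`,
`(2π)^{-m/2} ∫ e^{(i/2)⟨Mu,u⟩} (∫ e^{-i⟨v,u⟩} f(v) dv) du
   = |det M|^{-1/2} e^{(iπ/4) sgn M} ∫ e^{-(i/2)⟨M⁻¹v,v⟩} f(v) dv`,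
where `sgn M` is the number of positive eigenvalues of `M` minus the number of its negative
eigenvalues, counted with multiplicity. -/
theorem generalized_fresnel {m : ℕ} (M : Matrix (Fin m) (Fin m) ℝ)
    (hMsym : M.IsHermitian) (hM : M.det ≠ 0) (f : SchwartzMap (Fin m → ℝ) ℂ) :
    ((2 * Real.pi) ^ (-(m : ℝ) / 2) : ℝ) *
        ∫ u : Fin m → ℝ, Complex.exp ((Complex.I / 2) * (M.mulVec u ⬝ᵥ u : ℝ)) *
          ∫ v : Fin m → ℝ, Complex.exp (-(Complex.I) * (v ⬝ᵥ u : ℝ)) * f v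
      = (|M.det| ^ (-(1 : ℝ) / 2) : ℝ) *
          Complex.exp ((Complex.I * Real.pi / 4) *
            (((Finset.univ.filter fun i => 0 < hMsym.eigenvalues i).card : ℤ)
              - ((Finset.univ.filter fun i => hMsym.eigenvalues i < 0).card : ℤ) : ℤ)) *
          ∫ v : Fin m → ℝ, Complex.exp (-(Complex.I / 2) * (M⁻¹.mulVec v ⬝ᵥ v : ℝ)) * f v := by
  classical
  obtain ⟨h, hg⟩ := fresnel_inner_schwartz f
  set d : Fin m → ℝ := hMsym.eigenvalues with hd_def
  set Q : Matrix (Fin m) (Fin m) ℝ := (hMsym.eigenvectorUnitary : Matrix (Fin m) (Fin m) ℝ)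
    with hQ_def
  have hstar : star Q = Qᵀ := by
    rw [Matrix.star_eq_conjTranspose, Matrix.conjTranspose_eq_transpose_of_trivial]
  have hQmem := hMsym.eigenvectorUnitary.2
  rw [Unitary.mem_iff] at hQmem
  have hQ : Qᵀ * Q = 1 := by rw [← hstar]; exact hQmem.1
  have hMQ : M = Q * Matrix.diagonal d * Qᵀ := by
    have hsp := hMsym.spectral_theorem
    rw [← hstar, hd_def, hQ_def]
    simpa [RCLike.ofReal_real_eq_id] using hsp
  have hdet : M.det = ∏ i, d i := by
    have h1 : Q.det * Q.det = 1 := by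
      have := congrArg Matrix.det hQ
      simpa [Matrix.det_transpose] using this
    rw [hMQ, Matrix.det_mul, Matrix.det_mul, Matrix.det_diagonal, Matrix.det_transpose]
    linear_combination (∏ i, d i) * h1
  have hdne : ∀ i, d i ≠ 0 := fun i hi =>
    hM (by rw [hdet]; exact Finset.prod_eq_zero (Finset.mem_univ i) hi)
  -- the key limit identity
  have T1 := fresnel_step1 M h
  have T2 : (fun ε : ℝ => ∫ u : Fin m → ℝ, Complex.exp (-(ε:ℂ) * (u ⬝ᵥ u : ℝ)) *
        (Complex.exp ((Complex.I/2) * (M.mulVec u ⬝ᵥ u : ℝ)) * h u))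
      =ᶠ[nhdsWithin 0 (Set.Ioi 0)]
      (fun ε : ℝ => ∫ v : Fin m → ℝ, f v *
        ∏ i, ((Real.pi : ℂ) / ((ε:ℂ) - Complex.I * d i / 2)) ^ (1/2 : ℂ) *
          Complex.exp (-((Qᵀ.mulVec v i : ℝ):ℂ)^2 / (4 * ((ε:ℂ) - Complex.I * d i / 2)))) := by
    filter_upwards [self_mem_nhdsWithin] with ε (hε : ε ∈ Set.Ioi 0)
    rw [← fresnel_step2 M Q d hQ hMQ f hε]
    apply integral_congr_ae
    filter_upwards with u
    rw [hg u]
  have T3 := fresnel_step3 Q d hdne f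
  have hkey : (∫ u : Fin m → ℝ, Complex.exp ((Complex.I/2) * (M.mulVec u ⬝ᵥ u : ℝ)) * h u)
      = ∫ v : Fin m → ℝ, f v *
        ∏ i, ((Real.pi : ℂ) / (((0:ℝ):ℂ) - Complex.I * d i / 2)) ^ (1/2 : ℂ) *
          Complex.exp (-((Qᵀ.mulVec v i : ℝ):ℂ)^2 / (4 * (((0:ℝ):ℂ) - Complex.I * d i / 2))) :=
    tendsto_nhds_unique (T1.congr' T2) T3
  -- inverse matrix quadratic form
  have hQQt : Q * Qᵀ = 1 := mul_eq_one_comm.mp hQ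
  have hMinv : M⁻¹ = Q * Matrix.diagonal (fun i => (d i)⁻¹) * Qᵀ := by
    apply Matrix.inv_eq_right_inv
    rw [hMQ]
    calc Q * Matrix.diagonal d * Qᵀ * (Q * Matrix.diagonal (fun i => (d i)⁻¹) * Qᵀ)
        = Q * (Matrix.diagonal d * ((Qᵀ * Q) * (Matrix.diagonal (fun i => (d i)⁻¹) * Qᵀ))) := by
          simp only [Matrix.mul_assoc]
      _ = Q * (Matrix.diagonal d * (Matrix.diagonal (fun i => (d i)⁻¹) * Qᵀ)) := by
          rw [hQ, Matrix.one_mul]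
      _ = 1 := by
          rw [← Matrix.mul_assoc (Matrix.diagonal d), Matrix.diagonal_mul_diagonal]
          rw [show (fun i => d i * (d i)⁻¹) = fun _ => (1:ℝ) from
            funext fun i => mul_inv_cancel₀ (hdne i)]
          rw [Matrix.diagonal_one, Matrix.one_mul, hQQt]
  have hquadinv : ∀ v : Fin m → ℝ, M⁻¹.mulVec v ⬝ᵥ v = ∑ i, (Qᵀ.mulVec v i)^2 / d i := by
    intro v
    rw [hMinv, ← Matrix.mulVec_mulVec, ← Matrix.mulVec_mulVec, mulVec_dotProduct_eq]
    simp only [dotProduct, Matrix.mulVec_diagonal]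
    apply Finset.sum_congr rfl
    intro i _
    field_simp
  -- pointwise evaluation of the limit kernel
  have hprod : ∀ v : Fin m → ℝ, f v *
      ∏ i, ((Real.pi : ℂ) / (((0:ℝ):ℂ) - Complex.I * d i / 2)) ^ (1/2 : ℂ) *
        Complex.exp (-((Qᵀ.mulVec v i : ℝ):ℂ)^2 / (4 * (((0:ℝ):ℂ) - Complex.I * d i / 2)))
      = (((∏ i, Real.sqrt (2*Real.pi/|d i|)) : ℝ) : ℂ) *
          Complex.exp (Complex.I * Real.pi / 4 *
            (((∑ i, (if 0 < d i then (1:ℝ) else -1)) : ℝ) : ℂ)) *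
          (Complex.exp (-(Complex.I/2) * ((M⁻¹.mulVec v ⬝ᵥ v : ℝ) : ℂ)) * f v) := by
    intro v
    have hfac : ∀ i : Fin m,
        ((Real.pi : ℂ) / (((0:ℝ):ℂ) - Complex.I * d i / 2)) ^ (1/2 : ℂ) *
          Complex.exp (-((Qᵀ.mulVec v i : ℝ):ℂ)^2 / (4 * (((0:ℝ):ℂ) - Complex.I * d i / 2)))
        = (((Real.sqrt (2*Real.pi/|d i|)) : ℝ):ℂ) *
            (Complex.exp (Complex.I * Real.pi / 4 * (if 0 < d i then (1:ℂ) else -1)) *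
              Complex.exp (-(Complex.I/2) * ((((Qᵀ.mulVec v i)^2 / d i : ℝ)) : ℂ))) := by
      intro i
      rw [fresnel_phi_zero (hdne i), fresnel_psi_zero (hdne i), mul_assoc]
    rw [Finset.prod_congr rfl (fun i _ => hfac i), Finset.prod_mul_distrib,
      Finset.prod_mul_distrib, ← Complex.ofReal_prod, ← Complex.exp_sum, ← Complex.exp_sum]
    have hs1 : (∑ i, Complex.I * Real.pi / 4 * (if 0 < d i then (1:ℂ) else -1))
        = Complex.I * Real.pi / 4 * (((∑ i, (if 0 < d i then (1:ℝ) else -1)) : ℝ) : ℂ) := by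
      rw [← Finset.mul_sum]
      congr 1
      push_cast
      apply Finset.sum_congr rfl
      intro i _
      split_ifs <;> simp
    have hs2 : (∑ i, -(Complex.I/2) * ((((Qᵀ.mulVec v i)^2 / d i : ℝ)) : ℂ))
        = -(Complex.I/2) * ((M⁻¹.mulVec v ⬝ᵥ v : ℝ) : ℂ) := by
      rw [← Finset.mul_sum]
      congr 1
      rw [hquadinv v]
      push_cast
      ring
    rw [hs1, hs2]
    ring
  -- assemble everything
  rw [show (∫ u : Fin m → ℝ, Complex.exp ((Complex.I/2) * (M.mulVec u ⬝ᵥ u : ℝ)) *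
      ∫ v : Fin m → ℝ, Complex.exp (-(Complex.I) * (v ⬝ᵥ u : ℝ)) * f v)
      = (∫ u : Fin m → ℝ, Complex.exp ((Complex.I/2) * (M.mulVec u ⬝ᵥ u : ℝ)) * h u) from
      integral_congr_ae (by filter_upwards with u; rw [hg u])]
  rw [hkey, integral_congr_ae (Filter.Eventually.of_forall hprod),
    MeasureTheory.integral_const_mul]
  have hc : (((2 * Real.pi) ^ (-(m:ℝ)/2) : ℝ)) * (∏ i, Real.sqrt (2*Real.pi/|d i|))
      = |M.det| ^ (-(1:ℝ)/2) := by
    rw [hdet]; exact fresnel_const d hdne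
  rw [fresnel_sigma d hdne]
  rw [← hc]
  push_cast
  ring
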